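/- (Nonnegativity of the tightening constant) Let t = (t₁, …, tₘ) be a weight vector with tᵢ ≥ 0 and Σᵢ tᵢ = 1. Then δ_t ≥ 0. -/

import Mathlib

open Matrix

private lemma dotProduct_finsum {n m : ℕ} (v : Fin n → ℝ) (f : Fin m → (Fin n → ℝ)) :
    v ⬝ᵥ (∑ i, f i) = ∑ i, v ⬝ᵥ f i := by
  simp only [dotProduct, Finset.sum_apply, Finset.mul_sum]
  exact Finset.sum_comm

private lemma finsum_mulVec {n m : ℕ} (f : Fin m → Matrix (Fin n) (Fin n) ℝ)
    (v : Fin n → ℝ) : (∑ i, f i) *ᵥ v = ∑ i, f i *ᵥ v := by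
  ext j
  simp only [mulVec, dotProduct, Matrix.sum_apply, Finset.sum_apply, Finset.sum_mul]
  exact Finset.sum_comm

/-- (Nonnegativity of the tightening constant) For weights `tᵢ ≥ 0` with `Σᵢ tᵢ = 1`,
`δ_t = Σᵢ tᵢ xᵢᵀPᵢ⁻¹xᵢ - x_tᵀP_t⁻¹x_t ≥ 0`, where `P_t⁻¹ = Σᵢ tᵢPᵢ⁻¹` and
`x_t = P_t Σᵢ tᵢPᵢ⁻¹xᵢ`. -/
theorem tightening_constant_nonneg (n m : ℕ) (hn : 0 < n) (hm : 0 < m)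
    (x : Fin m → (Fin n → ℝ)) (P : Fin m → Matrix (Fin n) (Fin n) ℝ)
    (hP : ∀ i, (P i).PosDef)
    (t : Fin m → ℝ) (ht : ∀ i, 0 ≤ t i) (hts : ∑ i, t i = 1)
    (Ptinv : Matrix (Fin n) (Fin n) ℝ) (hPtinv : Ptinv = ∑ i, t i • (P i)⁻¹)
    (xt : Fin n → ℝ) (hxt : xt = Ptinv⁻¹ *ᵥ (∑ i, t i • ((P i)⁻¹ *ᵥ x i)))
    (δ : ℝ) (hδ : δ = (∑ i, t i * (x i ⬝ᵥ ((P i)⁻¹ *ᵥ x i))) - xt ⬝ᵥ (Ptinv *ᵥ xt)) :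
    0 ≤ δ := by
  set A : Fin m → Matrix (Fin n) (Fin n) ℝ := fun i => (P i)⁻¹ with hAdef
  have hA : ∀ i, (A i).PosDef := fun i => (hP i).inv
  -- Ptinv is positive definite
  have hex : ∃ i, 0 < t i := by
    by_contra h
    push_neg at h
    have : ∑ i, t i = 0 := Finset.sum_eq_zero fun i _ => le_antisymm (h i) (ht i)
    rw [hts] at this; norm_num at this
  have hS : Ptinv.PosDef := by
    rw [hPtinv]
    refine posDef_iff_dotProduct_mulVec.mpr ⟨?_, fun v hv => ?_⟩
    · show (∑ i, t i • A i)ᴴ = ∑ i, t i • A i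
      rw [conjTranspose_sum]
      exact Finset.sum_congr rfl fun i _ => by rw [conjTranspose_smul, star_trivial, (hA i).1]
    · obtain ⟨i₀, hi₀⟩ := hex
      have hrw : (∑ i, t i • A i) *ᵥ v = ∑ i, t i • (A i *ᵥ v) := by
        rw [finsum_mulVec]
        exact Finset.sum_congr rfl fun i _ => smul_mulVec (t i) (A i) v
      rw [hrw, dotProduct_finsum]
      refine Finset.sum_pos' (fun i _ => ?_) ⟨i₀, Finset.mem_univ i₀, ?_⟩
      · have := (hA i).posSemidef.dotProduct_mulVec_nonneg v
        simp only [star_trivial] at this ⊢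
        rw [dotProduct_smul]
        exact smul_nonneg (ht i) this
      · have := (hA i₀).dotProduct_mulVec_pos (x := v) (by simpa using hv)
        simp only [star_trivial] at this ⊢
        rw [dotProduct_smul]
        exact smul_pos hi₀ this
  have hdet : IsUnit Ptinv.det := hS.det_pos.ne'.isUnit
  -- Ptinv *ᵥ xt equals the weighted sum b
  have hmul : Ptinv *ᵥ xt = ∑ i, t i • (A i *ᵥ x i) := by
    rw [hxt, mulVec_mulVec, mul_nonsing_inv _ hdet, one_mulVec]
  -- symmetry of each A i
  have hsymm : ∀ i, (A i)ᵀ = A i := fun i => (hA i).1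
  have hsym : ∀ i, x i ⬝ᵥ (A i *ᵥ xt) = xt ⬝ᵥ (A i *ᵥ x i) := by
    intro i
    rw [dotProduct_comm, dotProduct_mulVec, ← mulVec_transpose, hsymm i]
  -- key sums
  have h2 : ∑ i, t i * (xt ⬝ᵥ (A i *ᵥ x i)) = xt ⬝ᵥ (Ptinv *ᵥ xt) := by
    rw [hmul, dotProduct_finsum]
    exact (Finset.sum_congr rfl fun i _ => by rw [dotProduct_smul]; rfl).symm
  have h3 : ∑ i, t i * (xt ⬝ᵥ (A i *ᵥ xt)) = xt ⬝ᵥ (Ptinv *ᵥ xt) := by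
    have hrw : Ptinv *ᵥ xt = ∑ i, t i • (A i *ᵥ xt) := by
      rw [hPtinv, finsum_mulVec]
      exact Finset.sum_congr rfl fun i _ => smul_mulVec (t i) (A i) xt
    rw [hrw, dotProduct_finsum]
    exact (Finset.sum_congr rfl fun i _ => by rw [dotProduct_smul]; rfl).symm
  -- δ equals a sum of nonnegative terms
  have hkey : δ = ∑ i, t i * ((x i - xt) ⬝ᵥ (A i *ᵥ (x i - xt))) := by
    have hterm : ∀ i, t i * ((x i - xt) ⬝ᵥ (A i *ᵥ (x i - xt)))
        = t i * (x i ⬝ᵥ (A i *ᵥ x i)) - 2 * (t i * (xt ⬝ᵥ (A i *ᵥ x i)))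
          + t i * (xt ⬝ᵥ (A i *ᵥ xt)) := by
      intro i
      rw [mulVec_sub, sub_dotProduct, dotProduct_sub, dotProduct_sub, hsym i]
      ring
    rw [hδ, Finset.sum_congr rfl fun i _ => hterm i]
    rw [Finset.sum_add_distrib, Finset.sum_sub_distrib, ← Finset.mul_sum, h2, h3]
    ring
  rw [hkey]
  refine Finset.sum_nonneg fun i _ => mul_nonneg (ht i) ?_
  have := (hA i).posSemidef.dotProduct_mulVec_nonneg (x i - xt)
  simpa using this
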